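/- Let L_n be the model filiform Lie algebra with basis e1,…,en and brackets [e1,ei] = e_{i+1} for 2 ≤ i ≤ n-1 (other brackets zero). Then the bilinear skew map Ψ_R defined by Ψ_R(e2,ei) = e_{i+2} for 3 ≤ i ≤ n-2 (other products zero) itself satisfies the Jacobi identity, and the sum bracket [e1,ei]+Ψ_R defines a Lie algebra (namely R_n). Consequently (L_n, R_n) form a compatible Lie algebra: every linear combination λ1·[-,-]_{L_n} + λ2·Ψ_R is a Lie bracket. -/

import Mathlib

open Submodule Module

section Defs
variable (K : Type*) [Field K] {g : Type*} [AddCommGroup g] [Module K g]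

def IsBilin (b : g → g → g) : Prop :=
  (∀ x y z : g, b (x + y) z = b x z + b y z) ∧
  (∀ x y z : g, b x (y + z) = b x y + b x z) ∧
  (∀ (c : K) (x y : g), b (c • x) y = c • b x y) ∧
  (∀ (c : K) (x y : g), b x (c • y) = c • b x y)

def IsSkew {g : Type*} [AddCommGroup g] (b : g → g → g) : Prop :=
  ∀ x y, b x y = - b y x

def JacId {g : Type*} [AddCommGroup g] (b : g → g → g) : Prop :=
  ∀ x y z, b (b x y) z + b (b y z) x + b (b z x) y = 0

def MixedJac {g : Type*} [AddCommGroup g] (b1 b2 : g → g → g) : Prop :=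
  ∀ x y z, b2 (b1 x y) z + b2 (b1 y z) x + b2 (b1 z x) y
    + b1 (b2 x y) z + b1 (b2 y z) x + b1 (b2 z x) y = 0

def brSpan (b : g → g → g) (S T : Submodule K g) : Submodule K g :=
  Submodule.span K {z | ∃ s ∈ S, ∃ t ∈ T, z = b s t}

def brSpan2 (b1 b2 : g → g → g) (S T : Submodule K g) : Submodule K g :=
  brSpan K b1 S T ⊔ brSpan K b2 S T

def lcs2 (b1 b2 : g → g → g) (I : Submodule K g) : ℕ → Submodule K g
  | 0 => I
  | k + 1 => brSpan2 K b1 b2 I (lcs2 b1 b2 I k)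

def der2 (b1 b2 : g → g → g) : ℕ → Submodule K g
  | 0 => ⊤
  | k + 1 => brSpan2 K b1 b2 (der2 b1 b2 k) (der2 b1 b2 k)

def IsIdeal (b1 b2 : g → g → g) (I : Submodule K g) : Prop :=
  ∀ x ∈ I, ∀ y : g, b1 x y ∈ I ∧ b2 x y ∈ I

def IsCLA (b1 b2 : g → g → g) : Prop :=
  IsBilin K b1 ∧ IsSkew b1 ∧ JacId b1 ∧
  IsBilin K b2 ∧ IsSkew b2 ∧ JacId b2 ∧ MixedJac b1 b2

end Defs

/-- `ebn n t` is the standard basis vector `e_t` (1-indexed, `t = 1,…,n`) of `Fin n → ℂ`;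
it is `0` for `t` out of range. -/
def ebn (n t : ℕ) : Fin n → ℂ := fun j => if (j : ℕ) + 1 = t then 1 else 0

/-- The bracket table of the model filiform Lie algebra `L_n`:
`[e_1, e_i] = e_{i+1}` for `2 ≤ i ≤ n - 1`, extended skew-symmetrically,
all other products zero. -/
def TLn (n : ℕ) : ℕ → ℕ → (Fin n → ℂ) := fun i j =>
  if i = 1 ∧ 2 ≤ j ∧ j ≤ n - 1 then ebn n (j + 1)
  else if j = 1 ∧ 2 ≤ i ∧ i ≤ n - 1 then -(ebn n (i + 1))
  else 0

/-- The table of the cocycle `Ψ_R`: `Ψ_R(e_2, e_i) = e_{i+2}` for `3 ≤ i ≤ n - 2`,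
extended skew-symmetrically, all other products zero. -/
def TPsiR (n : ℕ) : ℕ → ℕ → (Fin n → ℂ) := fun i j =>
  if i = 2 ∧ 3 ≤ j ∧ j ≤ n - 2 then ebn n (j + 2)
  else if j = 2 ∧ 3 ≤ i ∧ i ≤ n - 2 then -(ebn n (i + 2))
  else 0


/-! ### Auxiliary machinery -/

lemma ebn_repr (n : ℕ) (x : Fin n → ℂ) : x = ∑ i : Fin n, x i • ebn n ((i : ℕ) + 1) := by
  funext j
  simp only [Finset.sum_apply, Pi.smul_apply, ebn, smul_eq_mul, mul_ite, mul_one, mul_zero,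
    add_left_inj, Fin.val_inj]
  simp [eq_comm]

section Infra
variable {V : Type*} [AddCommGroup V] [Module ℂ V]

lemma bilin_zero_left {b : V → V → V} (hb : IsBilin ℂ b) (y : V) : b 0 y = 0 := by
  have := hb.2.2.1 (0 : ℂ) 0 y
  simpa using this

lemma bilin_zero_right {b : V → V → V} (hb : IsBilin ℂ b) (x : V) : b x 0 = 0 := by
  have := hb.2.2.2 (0 : ℂ) x 0
  simpa using this

lemma bilin_sum_left {b : V → V → V} (hb : IsBilin ℂ b) {ι : Type*} (s : Finset ι)
    (f : ι → V) (y : V) : b (∑ i ∈ s, f i) y = ∑ i ∈ s, b (f i) y := by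
  classical
  induction s using Finset.induction with
  | empty => simpa using bilin_zero_left hb y
  | insert _ _ h ih => simp [Finset.sum_insert h, hb.1, ih]

lemma bilin_sum_right {b : V → V → V} (hb : IsBilin ℂ b) {ι : Type*} (s : Finset ι)
    (f : ι → V) (x : V) : b x (∑ i ∈ s, f i) = ∑ i ∈ s, b x (f i) := by
  classical
  induction s using Finset.induction with
  | empty => simpa using bilin_zero_right hb x
  | insert _ _ h ih => simp [Finset.sum_insert h, hb.2.1, ih]

/-- Two bilinear maps agreeing on the standard basis agree everywhere. -/
lemma bilin_ext {n : ℕ} {b b' : (Fin n → ℂ) → (Fin n → ℂ) → (Fin n → ℂ)}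
    (hb : IsBilin ℂ b) (hb' : IsBilin ℂ b')
    (h : ∀ i j : Fin n, b (ebn n ((i:ℕ)+1)) (ebn n ((j:ℕ)+1))
      = b' (ebn n ((i:ℕ)+1)) (ebn n ((j:ℕ)+1))) :
    ∀ x y, b x y = b' x y := by
  intro x y
  rw [ebn_repr n x, ebn_repr n y]
  rw [bilin_sum_left hb, bilin_sum_left hb']
  refine Finset.sum_congr rfl fun i _ => ?_
  rw [hb.2.2.1, hb'.2.2.1, bilin_sum_right hb, bilin_sum_right hb']
  congr 1
  refine Finset.sum_congr rfl fun j _ => ?_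
  rw [hb.2.2.2, hb'.2.2.2, h]

end Infra

/-- closed formula for the `L_n` bracket -/
def F0 (n : ℕ) (x y : Fin n → ℂ) : Fin n → ℂ := fun j =>
  if h : 2 ≤ (j : ℕ) then
    x ⟨0, by have := j.isLt; omega⟩ * y ⟨(j : ℕ) - 1, by have := j.isLt; omega⟩
      - y ⟨0, by have := j.isLt; omega⟩ * x ⟨(j : ℕ) - 1, by have := j.isLt; omega⟩
  else 0

/-- closed formula for `Ψ_R` -/
def FR (n : ℕ) (x y : Fin n → ℂ) : Fin n → ℂ := fun j =>
  if h : 4 ≤ (j : ℕ) then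
    x ⟨1, by have := j.isLt; omega⟩ * y ⟨(j : ℕ) - 2, by have := j.isLt; omega⟩
      - y ⟨1, by have := j.isLt; omega⟩ * x ⟨(j : ℕ) - 2, by have := j.isLt; omega⟩
  else 0

section FormulaLemmas
variable (n : ℕ)

lemma F0_add_left (x x' y : Fin n → ℂ) : F0 n (x + x') y = F0 n x y + F0 n x' y := by
  funext j
  simp only [F0, Pi.add_apply, Fin.val_mk]
  split_ifs <;> first | ring1 | (exfalso; omega)

lemma F0_add_right (x y y' : Fin n → ℂ) : F0 n x (y + y') = F0 n x y + F0 n x y' := by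
  funext j
  simp only [F0, Pi.add_apply, Fin.val_mk]
  split_ifs <;> first | ring1 | (exfalso; omega)

lemma F0_smul_left (c : ℂ) (x y : Fin n → ℂ) : F0 n (c • x) y = c • F0 n x y := by
  funext j
  simp only [F0, Pi.smul_apply, smul_eq_mul, Fin.val_mk]
  split_ifs <;> first | ring1 | (exfalso; omega)

lemma F0_smul_right (c : ℂ) (x y : Fin n → ℂ) : F0 n x (c • y) = c • F0 n x y := by
  funext j
  simp only [F0, Pi.smul_apply, smul_eq_mul, Fin.val_mk]
  split_ifs <;> first | ring1 | (exfalso; omega)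

lemma FR_add_left (x x' y : Fin n → ℂ) : FR n (x + x') y = FR n x y + FR n x' y := by
  funext j
  simp only [FR, Pi.add_apply, Fin.val_mk]
  split_ifs <;> first | ring1 | (exfalso; omega)

lemma FR_add_right (x y y' : Fin n → ℂ) : FR n x (y + y') = FR n x y + FR n x y' := by
  funext j
  simp only [FR, Pi.add_apply, Fin.val_mk]
  split_ifs <;> first | ring1 | (exfalso; omega)

lemma FR_smul_left (c : ℂ) (x y : Fin n → ℂ) : FR n (c • x) y = c • FR n x y := by
  funext j
  simp only [FR, Pi.smul_apply, smul_eq_mul, Fin.val_mk]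
  split_ifs <;> first | ring1 | (exfalso; omega)

lemma FR_smul_right (c : ℂ) (x y : Fin n → ℂ) : FR n x (c • y) = c • FR n x y := by
  funext j
  simp only [FR, Pi.smul_apply, smul_eq_mul, Fin.val_mk]
  split_ifs <;> first | ring1 | (exfalso; omega)

lemma F0_bilin : IsBilin ℂ (F0 n) :=
  ⟨F0_add_left n, F0_add_right n, F0_smul_left n, F0_smul_right n⟩

lemma FR_bilin : IsBilin ℂ (FR n) :=
  ⟨FR_add_left n, FR_add_right n, FR_smul_left n, FR_smul_right n⟩

lemma F0_skew (x y : Fin n → ℂ) : F0 n x y = -(F0 n y x) := by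
  funext j
  simp only [F0, Pi.neg_apply]
  split_ifs <;> first | ring1 | (exfalso; omega)

lemma FR_skew (x y : Fin n → ℂ) : FR n x y = -(FR n y x) := by
  funext j
  simp only [FR, Pi.neg_apply]
  split_ifs <;> first | ring1 | (exfalso; omega)

lemma F0_jac (x y z : Fin n → ℂ) :
    F0 n (F0 n x y) z + F0 n (F0 n y z) x + F0 n (F0 n z x) y = 0 := by
  funext j
  simp only [F0, Fin.val_mk, Pi.add_apply, Pi.zero_apply]
  split_ifs <;> first | ring1 | (exfalso; omega)

lemma FR_jac (x y z : Fin n → ℂ) :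
    FR n (FR n x y) z + FR n (FR n y z) x + FR n (FR n z x) y = 0 := by
  funext j
  simp only [FR, Fin.val_mk, Pi.add_apply, Pi.zero_apply]
  split_ifs <;> first | ring1 | (exfalso; omega)

lemma mix_jac (x y z : Fin n → ℂ) :
    (F0 n (FR n x y) z + FR n (F0 n x y) z)
    + (F0 n (FR n y z) x + FR n (F0 n y z) x)
    + (F0 n (FR n z x) y + FR n (F0 n z x) y) = 0 := by
  funext j
  simp only [F0, FR, Fin.val_mk, Pi.add_apply, Pi.zero_apply, Nat.sub_sub, Nat.reduceAdd]
  split_ifs <;>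
    first
      | ring1
      | (exfalso; omega)
      | (have hj : (j : ℕ) = 4 := by omega
         simp only [hj, Nat.reduceSub]
         ring1)

lemma sum_jac (x y z : Fin n → ℂ) :
    (F0 n (F0 n x y + FR n x y) z + FR n (F0 n x y + FR n x y) z)
    + (F0 n (F0 n y z + FR n y z) x + FR n (F0 n y z + FR n y z) x)
    + (F0 n (F0 n z x + FR n z x) y + FR n (F0 n z x + FR n z x) y) = 0 := by
  simp only [F0_add_left, FR_add_left]
  have h1 := F0_jac n x y z
  have h2 := FR_jac n x y z
  have h3 := mix_jac n x y z
  linear_combination (norm := abel) h1 + h2 + h3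

lemma combo_jac (l1 l2 : ℂ) (x y z : Fin n → ℂ) :
    (l1 • F0 n (l1 • F0 n x y + l2 • FR n x y) z + l2 • FR n (l1 • F0 n x y + l2 • FR n x y) z)
    + (l1 • F0 n (l1 • F0 n y z + l2 • FR n y z) x + l2 • FR n (l1 • F0 n y z + l2 • FR n y z) x)
    + (l1 • F0 n (l1 • F0 n z x + l2 • FR n z x) y + l2 • FR n (l1 • F0 n z x + l2 • FR n z x) y)
    = 0 := by
  simp only [F0_add_left, FR_add_left, F0_smul_left, FR_smul_left]
  have h1 := F0_jac n x y z
  have h2 := FR_jac n x y z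
  have h3 := mix_jac n x y z
  linear_combination (norm := module) (l1 * l1) • h1 + (l2 * l2) • h2 + (l1 * l2) • h3

lemma F0_basis (a b : ℕ) (hn : 5 ≤ n) (ha1 : 1 ≤ a) (ha2 : a ≤ n) (hb1 : 1 ≤ b) (hb2 : b ≤ n) :
    F0 n (ebn n a) (ebn n b) = TLn n a b := by
  funext j
  simp only [F0, TLn, ebn, Fin.val_mk, Pi.neg_apply, Pi.zero_apply]
  split_ifs
  all_goals try simp only [ebn, Pi.neg_apply, Pi.zero_apply]
  all_goals try split_ifs
  all_goals first | (norm_num; done) | (exfalso; omega)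

lemma FR_basis (a b : ℕ) (hn : 5 ≤ n) (ha1 : 1 ≤ a) (ha2 : a ≤ n) (hb1 : 1 ≤ b) (hb2 : b ≤ n) :
    FR n (ebn n a) (ebn n b) = TPsiR n a b := by
  funext j
  simp only [FR, TPsiR, ebn, Fin.val_mk, Pi.neg_apply, Pi.zero_apply]
  split_ifs
  all_goals try simp only [ebn, Pi.neg_apply, Pi.zero_apply]
  all_goals try split_ifs
  all_goals first | (norm_num; done) | (exfalso; omega)

end FormulaLemmas

theorem stmt13 (n : ℕ) (hn : 5 ≤ n)
    (b0 bR : (Fin n → ℂ) → (Fin n → ℂ) → (Fin n → ℂ))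
    (hb0 : IsBilin ℂ b0) (hbR : IsBilin ℂ bR)
    (h0 : ∀ i j : ℕ, 1 ≤ i → i ≤ n → 1 ≤ j → j ≤ n → b0 (ebn n i) (ebn n j) = TLn n i j)
    (hR : ∀ i j : ℕ, 1 ≤ i → i ≤ n → 1 ≤ j → j ≤ n → bR (ebn n i) (ebn n j) = TPsiR n i j) :
    JacId bR ∧
    (IsSkew (fun x y => b0 x y + bR x y) ∧ JacId (fun x y => b0 x y + bR x y)) ∧
    (∀ l1 l2 : ℂ, IsSkew (fun x y => l1 • b0 x y + l2 • bR x y) ∧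
      JacId (fun x y => l1 • b0 x y + l2 • bR x y)) := by
  -- identify the abstract brackets with the closed formulas
  have hb0eq : ∀ x y, b0 x y = F0 n x y := by
    refine bilin_ext hb0 (F0_bilin n) fun i j => ?_
    rw [h0 ((i:ℕ)+1) ((j:ℕ)+1) (by omega) (by have := i.isLt; omega) (by omega)
      (by have := j.isLt; omega)]
    rw [F0_basis n ((i:ℕ)+1) ((j:ℕ)+1) hn (by omega) (by have := i.isLt; omega) (by omega)
      (by have := j.isLt; omega)]
  have hbReq : ∀ x y, bR x y = FR n x y := by
    refine bilin_ext hbR (FR_bilin n) fun i j => ?_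
    rw [hR ((i:ℕ)+1) ((j:ℕ)+1) (by omega) (by have := i.isLt; omega) (by omega)
      (by have := j.isLt; omega)]
    rw [FR_basis n ((i:ℕ)+1) ((j:ℕ)+1) hn (by omega) (by have := i.isLt; omega) (by omega)
      (by have := j.isLt; omega)]
  refine ⟨?_, ⟨?_, ?_⟩, fun l1 l2 => ⟨?_, ?_⟩⟩
  · intro x y z
    simp only [hbReq]
    exact FR_jac n x y z
  · intro x y
    simp only [hb0eq, hbReq]
    rw [F0_skew n x y, FR_skew n x y]
    abel
  · intro x y z
    simp only [hb0eq, hbReq]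
    exact sum_jac n x y z
  · intro x y
    simp only [hb0eq, hbReq]
    rw [F0_skew n x y, FR_skew n x y]
    simp only [smul_neg]
    abel
  · intro x y z
    simp only [hb0eq, hbReq]
    exact combo_jac n l1 l2 x y z
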